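/- Let f ∈ L¹(0,1] be nonnegative non-increasing with f** ≤ K·f pointwise for some constant K > 1, where f**(t) = (1/t)∫₀ᵗ f dλ. Then there exists a constant C > 0 and δ = 1 - 1/K ∈ (0,1) such that f**(t) ≤ C·t^{-δ} for all t ∈ (0,1]. In fact one can take C = ∫₀¹ f dλ. -/

import Mathlib

open MeasureTheory Set Filter

theorem stmt_4 (f : ℝ → ℝ) (K : ℝ)
    (hf_nonneg : ∀ t ∈ Ioc (0:ℝ) 1, 0 ≤ f t)
    (hf_anti : AntitoneOn f (Ioc (0:ℝ) 1))
    (hf_int : IntegrableOn f (Ioc (0:ℝ) 1) volume)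
    (hK : 1 < K)
    (hreg : ∀ t ∈ Ioc (0:ℝ) 1, (1 / t) * ∫ s in Ioc (0:ℝ) t, f s ≤ K * f t) :
    (0 < 1 - 1 / K ∧ 1 - 1 / K < 1) ∧
      ∀ t ∈ Ioc (0:ℝ) 1,
        (1 / t) * ∫ s in Ioc (0:ℝ) t, f s ≤
          (∫ s in Ioc (0:ℝ) 1, f s) * t ^ (-(1 - 1 / K)) := by
  have hK0 : (0:ℝ) < K := lt_trans one_pos hK
  have hKinv : 1 / K < 1 := by rw [div_lt_one hK0]; exact hK
  have hKinv0 : 0 < 1 / K := by positivity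
  refine ⟨⟨by linarith, by linarith⟩, ?_⟩
  set F : ℝ → ℝ := fun t => ∫ s in Ioc (0:ℝ) t, f s with hFdef
  -- Key one-step inequality
  have key : ∀ s t : ℝ, 0 < s → s ≤ t → t ≤ 1 →
      F s ≤ F t * (1 - (t - s) / (K * t)) := by
    intro s t hs hst ht1
    have ht0 : 0 < t := lt_of_lt_of_le hs hst
    have htm : t ∈ Ioc (0:ℝ) 1 := ⟨ht0, ht1⟩
    have hsub : Ioc s t ⊆ Ioc (0:ℝ) 1 := fun x hx => ⟨lt_trans hs hx.1, le_trans hx.2 ht1⟩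
    have hsub0 : Ioc (0:ℝ) s ⊆ Ioc (0:ℝ) 1 := fun x hx =>
      ⟨hx.1, le_trans hx.2 (le_trans hst ht1)⟩
    have hsplit : F t = F s + ∫ x in Ioc s t, f x := by
      simp only [hFdef]
      have hu : Ioc (0:ℝ) s ∪ Ioc s t = Ioc (0:ℝ) t := Ioc_union_Ioc_eq_Ioc hs.le hst
      rw [← hu, setIntegral_union (Ioc_disjoint_Ioc_of_le le_rfl) measurableSet_Ioc
        (hf_int.mono_set hsub0) (hf_int.mono_set hsub)]
    -- lower bound for the piece
    have hlow : (t - s) * f t ≤ ∫ x in Ioc s t, f x := by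
      have hconst : ∫ x in Ioc s t, (fun _ => f t) x ∂volume = (t - s) * f t := by
        rw [setIntegral_const, measureReal_def, Real.volume_Ioc, smul_eq_mul,
          ENNReal.toReal_ofReal (by linarith : (0:ℝ) ≤ t - s)]
      calc (t - s) * f t = ∫ x in Ioc s t, (fun _ => f t) x ∂volume := hconst.symm
        _ ≤ ∫ x in Ioc s t, f x := by
            apply setIntegral_mono_on
            · exact integrableOn_const (by rw [Real.volume_Ioc]; exact ENNReal.ofReal_ne_top)
            · exact hf_int.mono_set hsub
            · exact measurableSet_Ioc
            · intro x hx
              exact hf_anti (hsub hx) htm hx.2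
    have hft : F t / (K * t) ≤ f t := by
      have h1 := hreg t htm
      rw [hFdef] at *
      rw [div_le_iff₀ (by positivity)]
      calc (∫ s in Ioc (0:ℝ) t, f s) = ((1/t) * ∫ s in Ioc (0:ℝ) t, f s) * t := by
            field_simp
        _ ≤ (K * f t) * t := by
            apply mul_le_mul_of_nonneg_right h1 ht0.le
        _ = f t * (K * t) := by ring
    have hstep : (t - s) * (F t / (K * t)) ≤ (t - s) * f t :=
      mul_le_mul_of_nonneg_left hft (by linarith)
    have : F s = F t - ∫ x in Ioc s t, f x := by linarith [hsplit]
    rw [this]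
    have : F t - (∫ x in Ioc s t, f x) ≤ F t - (t - s) * (F t / (K * t)) := by
      linarith
    refine le_trans this (le_of_eq ?_)
    field_simp
  -- iterated inequality
  have chain : ∀ r : ℝ, 0 < r → r ≤ 1 → ∀ k : ℕ,
      F (r ^ k) ≤ F 1 * (1 - (1 - r) / K) ^ k := by
    intro r hr0 hr1 k
    have hq0 : 0 ≤ 1 - (1 - r) / K := by
      have : (1 - r) / K < 1 := by rw [div_lt_one hK0]; linarith
      linarith
    induction k with
    | zero => simp
    | succ k ih =>
      have hrk0 : 0 < r ^ (k + 1) := pow_pos hr0 _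
      have hrkk : r ^ (k + 1) ≤ r ^ k := pow_le_pow_of_le_one hr0.le hr1 (by omega)
      have hrk1 : r ^ k ≤ 1 := pow_le_one₀ hr0.le hr1
      have h := key (r ^ (k + 1)) (r ^ k) hrk0 hrkk hrk1
      have heq : (r ^ k - r ^ (k + 1)) / (K * r ^ k) = (1 - r) / K := by
        have hrk : (0:ℝ) < r ^ k := pow_pos hr0 _
        field_simp
        ring
      rw [heq] at h
      calc F (r ^ (k + 1)) ≤ F (r ^ k) * (1 - (1 - r) / K) := h
        _ ≤ (F 1 * (1 - (1 - r) / K) ^ k) * (1 - (1 - r) / K) :=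
            mul_le_mul_of_nonneg_right ih hq0
        _ = F 1 * (1 - (1 - r) / K) ^ (k + 1) := by ring
  intro t ht
  rcases eq_or_lt_of_le ht.2 with h1 | htlt
  · -- t = 1
    subst h1
    simp [Real.one_rpow, hFdef]
  -- t < 1 : main case
  have ht0 : 0 < t := ht.1
  set c : ℕ → ℝ := fun n => (t ^ ((n:ℝ)⁻¹) - 1) / K with hcdef
  have hmain : ∀ n : ℕ, 1 ≤ n → F t ≤ F 1 * (1 + c n) ^ n := by
    intro n hn
    have hn0 : (n:ℝ) ≠ 0 := Nat.cast_ne_zero.2 (by omega)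
    have hr0 : 0 < t ^ ((n:ℝ)⁻¹) := Real.rpow_pos_of_pos ht0 _
    have hr1 : t ^ ((n:ℝ)⁻¹) ≤ 1 := Real.rpow_le_one ht0.le ht.2 (by positivity)
    have h := chain _ hr0 hr1 n
    have hpow : (t ^ ((n:ℝ)⁻¹)) ^ n = t := by
      rw [← Real.rpow_natCast (t ^ ((n:ℝ)⁻¹)) n, ← Real.rpow_mul ht0.le,
        inv_mul_cancel₀ hn0, Real.rpow_one]
    rw [hpow] at h
    have : 1 - (1 - t ^ ((n:ℝ)⁻¹)) / K = 1 + c n := by rw [hcdef]; ring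
    rwa [this] at h
  -- limit computations
  have hlogt : Real.log t < 0 := Real.log_neg ht0 htlt
  -- n * (t^{1/n} - 1) → log t
  have hA : Tendsto (fun n : ℕ => (n:ℝ) * (t ^ ((n:ℝ)⁻¹) - 1)) atTop (nhds (Real.log t)) := by
    have hderiv : HasDerivAt (fun x : ℝ => t ^ x) (Real.log t) 0 := by
      have := (Real.hasStrictDerivAt_const_rpow ht0 0).hasDerivAt
      simpa [Real.rpow_zero] using this
    have hslope := hasDerivAt_iff_tendsto_slope.1 hderiv
    have hu : Tendsto (fun n : ℕ => (n:ℝ)⁻¹) atTop (nhdsWithin 0 {(0:ℝ)}ᶜ) := by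
      apply tendsto_nhdsWithin_of_tendsto_nhds_of_eventually_within
      · exact tendsto_inv_atTop_zero.comp tendsto_natCast_atTop_atTop
      · filter_upwards [eventually_ge_atTop 1] with n hn
        simp only [mem_compl_iff, mem_singleton_iff]
        exact inv_ne_zero (Nat.cast_ne_zero.2 (by omega))
    have := hslope.comp hu
    apply this.congr'
    filter_upwards [eventually_ge_atTop 1] with n hn
    have hn0 : (n:ℝ) ≠ 0 := Nat.cast_ne_zero.2 (by omega)
    simp only [Function.comp, slope_def_field, Real.rpow_zero]
    rw [div_eq_iff (by simpa using hn0)]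
    field_simp
    ring
  have hnc : Tendsto (fun n : ℕ => (n:ℝ) * c n) atTop (nhds (Real.log t / K)) := by
    have := hA.div_const K
    apply this.congr
    intro n
    rw [hcdef]
    ring
  have hc0 : Tendsto c atTop (nhds 0) := by
    have h2 : Tendsto (fun n : ℕ => ((n:ℝ) * c n) * (n:ℝ)⁻¹) atTop
        (nhds (Real.log t / K * 0)) :=
      hnc.mul (tendsto_inv_atTop_zero.comp tendsto_natCast_atTop_atTop)
    rw [mul_zero] at h2
    apply h2.congr'
    filter_upwards [eventually_ge_atTop 1] with n hn
    have hn0 : (n:ℝ) ≠ 0 := Nat.cast_ne_zero.2 (by omega)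
    field_simp
  have hcneg : ∀ n : ℕ, 1 ≤ n → c n < 0 := by
    intro n hn
    have : t ^ ((n:ℝ)⁻¹) < 1 :=
      Real.rpow_lt_one ht0.le htlt (by positivity)
    rw [hcdef]
    apply div_neg_of_neg_of_pos (by linarith) hK0
  have hcgt : ∀ n : ℕ, -1 < c n := by
    intro n
    have h1 : 0 < t ^ ((n:ℝ)⁻¹) := Real.rpow_pos_of_pos ht0 _
    have h2 : (-1) / K ≤ c n := by
      rw [hcdef]
      exact (div_le_div_iff_of_pos_right hK0).2 (by linarith)
    have h3 : (-1:ℝ) < -1 / K := by rw [neg_div]; linarith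
    linarith
  -- log(1 + c n) / c n → 1
  have hB : Tendsto (fun n : ℕ => Real.log (1 + c n) / c n) atTop (nhds 1) := by
    have hderiv : HasDerivAt Real.log 1 1 := by
      simpa using Real.hasDerivAt_log one_ne_zero
    have hslope := hasDerivAt_iff_tendsto_slope.1 hderiv
    have hu : Tendsto (fun n : ℕ => 1 + c n) atTop (nhdsWithin 1 {(1:ℝ)}ᶜ) := by
      apply tendsto_nhdsWithin_of_tendsto_nhds_of_eventually_within
      · simpa using (tendsto_const_nhds.add hc0)
      · filter_upwards [eventually_ge_atTop 1] with n hn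
        simp only [mem_compl_iff, mem_singleton_iff]
        have := hcneg n hn
        intro h
        nlinarith [h]
    have := hslope.comp hu
    apply this.congr
    intro n
    simp [Function.comp, slope_def_field, Real.log_one]
  -- n * log (1 + c n) → log t / K
  have hC : Tendsto (fun n : ℕ => (n:ℝ) * Real.log (1 + c n)) atTop
      (nhds (Real.log t / K)) := by
    have h2 := hnc.mul hB
    rw [mul_one] at h2
    apply h2.congr'
    filter_upwards [eventually_ge_atTop 1] with n hn
    have hcn := hcneg n hn
    have h3 : (n:ℝ) * c n * (Real.log (1 + c n) / c n)
        = (n:ℝ) * Real.log (1 + c n) * (c n / c n) := by ring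
    rw [h3, div_self hcn.ne, mul_one]
  -- (1 + c n)^n → t^{1/K}
  have hD : Tendsto (fun n : ℕ => (1 + c n) ^ n) atTop (nhds (t ^ (1/K))) := by
    have h2 : Tendsto (fun n : ℕ => Real.exp ((n:ℝ) * Real.log (1 + c n))) atTop
        (nhds (Real.exp (Real.log t / K))) := (Real.continuous_exp.tendsto _).comp hC
    have he : Real.exp (Real.log t / K) = t ^ (1/K) := by
      rw [Real.rpow_def_of_pos ht0]
      ring_nf
    rw [he] at h2
    apply h2.congr
    intro n
    have hpos : 0 < 1 + c n := by linarith [hcgt n]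
    rw [← Real.exp_log hpos, ← Real.exp_nat_mul, Real.exp_log hpos]
  -- conclude F t ≤ F 1 * t ^ (1/K)
  have hF : F t ≤ F 1 * t ^ (1/K) := by
    apply ge_of_tendsto (tendsto_const_nhds.mul hD)
    filter_upwards [eventually_ge_atTop 1] with n hn
    exact hmain n hn
  -- final conversion
  have hrpow : t ^ (-(1 - 1/K)) = t ^ (1/K) * t⁻¹ := by
    have : -(1 - 1/K) = 1/K + (-1) := by ring
    rw [this, Real.rpow_add ht0, Real.rpow_neg_one]
  rw [hrpow]
  have := mul_le_mul_of_nonneg_left hF (inv_nonneg.2 ht0.le)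
  calc (1 / t) * F t = t⁻¹ * F t := by rw [one_div]
    _ ≤ t⁻¹ * (F 1 * t ^ (1/K)) := this
    _ = F 1 * (t ^ (1/K) * t⁻¹) := by ring
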